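/- Let x, y : [0,∞) → [0,∞) be measurable with x differentiable, satisfying x'(t) + y(t) ≤ C(x(t)² + 1) and x(t) ≤ C y(t) for all t ≥ 0, for some C > 0, and suppose ∫₀^∞ x(s) ds < ∞. Then limsup_{t→∞} ∫_t^{t+a} y(s) ds ≤ C' a for every a > 0, where C' depends only on C. -/

import Mathlib

open MeasureTheory Filter Topology Set Real


/-- tail integrals of an integrable nonneg function tend to 0 -/
lemma tail_tendsto (x : ℝ → ℝ) (hint : IntegrableOn x (Set.Ici 0)) :
    Tendsto (fun u => ∫ s in Set.Ioi u, x s) atTop (𝓝 0) := by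
  have hint' : IntegrableOn x (Set.Ioi 0) := hint.mono_set Set.Ioi_subset_Ici_self
  have h1 : Tendsto (fun u => ∫ s in (0:ℝ)..u, x s) atTop
      (𝓝 (∫ s in Set.Ioi 0, x s)) :=
    MeasureTheory.intervalIntegral_tendsto_integral_Ioi 0 hint' tendsto_id
  have h2 : Tendsto (fun u => (∫ s in Set.Ioi 0, x s) - ∫ s in (0:ℝ)..u, x s) atTop (𝓝 0) := by
    simpa using (tendsto_const_nhds (x := ∫ s in Set.Ioi 0, x s)).sub h1
  refine h2.congr' ?_
  filter_upwards [eventually_ge_atTop (0:ℝ)] with u hu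
  have hsplit : (∫ s in Set.Ioc 0 u, x s) + ∫ s in Set.Ioi u, x s
      = ∫ s in Set.Ioi 0, x s := by
    rw [← MeasureTheory.setIntegral_union (Set.Ioc_disjoint_Ioi le_rfl) measurableSet_Ioi
      (hint'.mono_set Set.Ioc_subset_Ioi_self) (hint'.mono_set (Set.Ioi_subset_Ioi hu)),
      Set.Ioc_union_Ioi_eq_Ioi hu]
  rw [intervalIntegral.integral_of_le hu]
  linarith


lemma arctan_anti (x x' : ℝ → ℝ) (C : ℝ)
    (hderiv : ∀ t, 0 ≤ t → HasDerivAt x (x' t) t)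
    (hx' : ∀ t, 0 ≤ t → x' t ≤ C * (x t ^ 2 + 1)) :
    AntitoneOn (fun u => Real.arctan (x u) - C * u) (Set.Ici 0) := by
  have hFd : ∀ u, 0 ≤ u →
      HasDerivAt (fun u => Real.arctan (x u) - C * u)
        (1 / (1 + x u ^ 2) * x' u - C) u := by
    intro u hu
    have h1 : HasDerivAt (fun u => Real.arctan (x u)) (1 / (1 + x u ^ 2) * x' u) u :=
      (Real.hasDerivAt_arctan (x u)).comp u (hderiv u hu)
    have h2 : HasDerivAt (fun u : ℝ => C * u) C u := by
      simpa using (hasDerivAt_id u).const_mul C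
    exact h1.sub h2
  apply antitoneOn_of_deriv_nonpos (convex_Ici 0)
  · exact fun u hu => ((hFd u hu).continuousAt).continuousWithinAt
  · intro u hu
    rw [interior_Ici] at hu
    exact ((hFd u hu.le).differentiableAt).differentiableWithinAt
  · intro u hu
    rw [interior_Ici] at hu
    rw [(hFd u hu.le).deriv]
    have h1 : (0:ℝ) < 1 + x u ^ 2 := by positivity
    have h2 := hx' u hu.le
    rw [sub_nonpos, div_mul_eq_mul_div, one_mul, div_le_iff₀ h1]
    nlinarith


lemma key_decay (x : ℝ → ℝ) (C : ℝ) (hC : 0 < C)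
    (hxnonneg : ∀ t, 0 ≤ t → 0 ≤ x t)
    (hxcont : ∀ t, 0 ≤ t → ContinuousAt x t)
    (hFanti : AntitoneOn (fun u => Real.arctan (x u) - C * u) (Set.Ici 0))
    (hint : IntegrableOn x (Set.Ici 0))
    (t : ℝ) (ht : Real.pi / (2 * C) ≤ t) :
    Real.log (1 + x t ^ 2) ≤ 2 * C * ∫ s in Set.Ioi (t - Real.pi / (2 * C)), x s := by
  have hpi := Real.pi_pos
  have ht0 : (0:ℝ) ≤ t := le_trans (by positivity) ht
  set θ := Real.arctan (x t) with hθdef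
  have hθ0 : 0 ≤ θ := by
    rw [hθdef, ← Real.arctan_zero]
    exact Real.arctan_strictMono.monotone (hxnonneg t ht0)
  have hθlt : θ < Real.pi / 2 := Real.arctan_lt_pi_div_two _
  set b := t - θ / C with hbdef
  have hbt : b ≤ t := by
    have : 0 ≤ θ / C := div_nonneg hθ0 hC.le
    simp [hbdef]; linarith
  have hb0 : 0 ≤ b := by
    have : θ / C ≤ Real.pi / (2 * C) := by
      rw [div_le_div_iff₀ hC (by positivity)]
      nlinarith
    simp [hbdef]; linarith
  -- pointwise lower bound
  have hpoint : ∀ s ∈ Set.Icc b t, Real.tan (θ - C * (t - s)) ≤ x s := by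
    intro s hs
    have hs0 : 0 ≤ s := le_trans hb0 hs.1
    have hF := hFanti (Set.mem_Ici.2 hs0) (Set.mem_Ici.2 ht0) hs.2
    -- arctan (x s) ≥ θ - C * (t - s)
    have harc : θ - C * (t - s) ≤ Real.arctan (x s) := by
      simp only at hF; nlinarith
    have hα0 : 0 ≤ θ - C * (t - s) := by
      have : C * (t - s) ≤ C * (t - b) := by
        apply mul_le_mul_of_nonneg_left (by linarith [hs.1]) hC.le
      have htb : C * (t - b) = θ := by
        rw [hbdef]; linear_combination mul_div_cancel₀ θ hC.ne'
      linarith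
    have hCts : 0 ≤ C * (t - s) := mul_nonneg hC.le (by linarith [hs.2])
    have := Real.strictMonoOn_tan.monotoneOn
      (Set.mem_Ioo.2 ⟨by linarith, by linarith [hθlt]⟩)
      (Set.mem_Ioo.2 ⟨Real.neg_pi_div_two_lt_arctan _, Real.arctan_lt_pi_div_two _⟩) harc
    rwa [Real.tan_arctan] at this
  -- FTC computation of ∫_b^t tan (θ - C (t - s)) ds
  have hcospos : ∀ s ∈ Set.Icc b t, 0 < Real.cos (θ - C * (t - s)) := by
    intro s hs
    apply Real.cos_pos_of_mem_Ioo
    constructor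
    · have : C * (t - s) ≤ C * (t - b) := by
        apply mul_le_mul_of_nonneg_left (by linarith [hs.1]) hC.le
      have htb : C * (t - b) = θ := by rw [hbdef]; linear_combination mul_div_cancel₀ θ hC.ne'
      nlinarith
    · have : 0 ≤ C * (t - s) := mul_nonneg hC.le (by linarith [hs.2])
      linarith
  have hGderiv : ∀ s ∈ Set.uIcc b t,
      HasDerivAt (fun s => -(1 / C) * Real.log (Real.cos (θ - C * (t - s))))
        (Real.tan (θ - C * (t - s))) s := by
    intro s hs
    rw [Set.uIcc_of_le hbt] at hs
    have hin : HasDerivAt (fun s : ℝ => θ - C * (t - s)) C s := by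
      have h0 : HasDerivAt (fun s : ℝ => θ - C * t + C * s) C s := by
        simpa using ((hasDerivAt_id s).const_mul C).const_add (θ - C * t)
      have heq : (fun s : ℝ => θ - C * (t - s)) = fun s : ℝ => θ - C * t + C * s := by
        funext u; ring
      rw [heq]; exact h0
    have hcos : HasDerivAt (fun s : ℝ => Real.cos (θ - C * (t - s)))
        (-Real.sin (θ - C * (t - s)) * C) s := (Real.hasDerivAt_cos _).comp s hin
    have hlog : HasDerivAt (fun s : ℝ => Real.log (Real.cos (θ - C * (t - s))))
        ((Real.cos (θ - C * (t - s)))⁻¹ * (-Real.sin (θ - C * (t - s)) * C)) s :=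
      by have h := (Real.hasDerivAt_log (hcospos s hs).ne').comp s hcos; exact h
    have := hlog.const_mul (-(1 / C))
    refine this.congr_deriv ?_
    rw [Real.tan_eq_sin_div_cos]
    have hc0 := (hcospos s hs).ne'
    field_simp
  have hcont : ContinuousOn (fun s => Real.tan (θ - C * (t - s))) (Set.uIcc b t) := by
    rw [Set.uIcc_of_le hbt]
    intro s hs
    apply ContinuousAt.continuousWithinAt
    have h1 : ContinuousAt (fun s : ℝ => θ - C * (t - s)) s := by fun_prop
    exact ContinuousAt.comp (g := Real.tan) (f := fun s : ℝ => θ - C * (t - s)) (x := s)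
      (Real.continuousAt_tan.2 (hcospos s hs).ne') h1
  have hTanInt : IntervalIntegrable (fun s => Real.tan (θ - C * (t - s)))
      MeasureTheory.volume b t := by
    apply ContinuousOn.intervalIntegrable hcont
  have hFTC := intervalIntegral.integral_eq_sub_of_hasDerivAt hGderiv hTanInt
  have hval : (∫ s in b..t, Real.tan (θ - C * (t - s)))
      = Real.log (1 + x t ^ 2) / (2 * C) := by
    rw [hFTC]
    have e1 : θ - C * (t - t) = θ := by ring
    have e2 : θ - C * (t - b) = 0 := by rw [hbdef]; linear_combination -(mul_div_cancel₀ θ hC.ne')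
    rw [e1, e2, Real.cos_zero, Real.log_one]
    have hc : Real.cos θ ^ 2 = 1 / (1 + x t ^ 2) := Real.cos_sq_arctan (x t)
    have hcpos : 0 < Real.cos θ := Real.cos_arctan_pos _
    have h1x : (0:ℝ) < 1 + x t ^ 2 := by positivity
    have hlog2 : 2 * Real.log (Real.cos θ) = - Real.log (1 + x t ^ 2) := by
      have := Real.log_pow (Real.cos θ) 2
      rw [hc] at this
      rw [Real.log_div one_ne_zero h1x.ne', Real.log_one] at this
      push_cast at this
      linarith
    have hlog2' : Real.log (Real.cos θ) = -(Real.log (1 + x t ^ 2)) / 2 := by linarith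
    rw [mul_zero, sub_zero, hlog2']
    ring
  -- integral comparison
  have hxInt : IntervalIntegrable x MeasureTheory.volume b t := by
    rw [intervalIntegrable_iff_integrableOn_Ioc_of_le hbt]
    exact hint.mono_set (fun s hs => le_trans hb0 hs.1.le)
  have hmono := intervalIntegral.integral_mono_on hbt hTanInt hxInt hpoint
  have htail : (∫ s in b..t, x s) ≤ ∫ s in Set.Ioi (t - Real.pi / (2 * C)), x s := by
    rw [intervalIntegral.integral_of_le hbt]
    apply MeasureTheory.setIntegral_mono_set
    · apply hint.mono_set
      intro s hs
      have : Real.pi / (2 * C) ≤ t := ht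
      exact le_trans (by linarith [Set.mem_Ioi.1 hs]; ) (le_of_lt (Set.mem_Ioi.1 hs))
    · filter_upwards [MeasureTheory.ae_restrict_mem measurableSet_Ioi] with s hs
      exact hxnonneg s (by
        have h1 : t - Real.pi / (2 * C) ≤ s := (Set.mem_Ioi.1 hs).le
        linarith)
    · apply HasSubset.Subset.eventuallyLE
      intro s hs
      have hθC : θ / C ≤ Real.pi / (2 * C) := by
        rw [div_le_div_iff₀ hC (by positivity)]
        nlinarith
      have := hs.1
      simp only [Set.mem_Ioi]
      simp only [hbdef] at this
      linarith
  rw [hval] at hmono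
  have hfin := le_trans hmono htail
  have h2C : (0:ℝ) < 2 * C := by positivity
  calc Real.log (1 + x t ^ 2)
      = Real.log (1 + x t ^ 2) / (2 * C) * (2 * C) := by field_simp
    _ ≤ (∫ s in Set.Ioi (t - Real.pi / (2 * C)), x s) * (2 * C) :=
        mul_le_mul_of_nonneg_right hfin h2C.le
    _ = 2 * C * ∫ s in Set.Ioi (t - Real.pi / (2 * C)), x s := by ring


lemma x_tendsto_zero (x : ℝ → ℝ) (C : ℝ) (hC : 0 < C)
    (hxnonneg : ∀ t, 0 ≤ t → 0 ≤ x t)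
    (hkey : ∀ t, Real.pi / (2 * C) ≤ t →
      Real.log (1 + x t ^ 2) ≤ 2 * C * ∫ s in Set.Ioi (t - Real.pi / (2 * C)), x s)
    (htail : Tendsto (fun u => ∫ s in Set.Ioi u, x s) atTop (𝓝 0)) :
    Tendsto x atTop (𝓝 0) := by
  set R : ℝ → ℝ := fun t => ∫ s in Set.Ioi (t - Real.pi / (2 * C)), x s with hR
  have hRtend : Tendsto R atTop (𝓝 0) :=
    htail.comp (tendsto_atTop_add_const_right atTop _ tendsto_id)
  have hg : Tendsto (fun t => Real.sqrt (Real.exp (2 * C * R t) - 1)) atTop (𝓝 0) := by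
    have h1 : Tendsto (fun t => Real.exp (2 * C * R t) - 1) atTop (𝓝 0) := by
      have h0 : Tendsto (fun t => 2 * C * R t) atTop (𝓝 0) := by
        simpa using hRtend.const_mul (2 * C)
      have := (Real.continuous_exp.tendsto 0).comp h0
      simpa using this.sub_const 1
    have := (Real.continuous_sqrt.tendsto 0).comp h1
    simpa [Function.comp_def] using this
  apply tendsto_of_tendsto_of_tendsto_of_le_of_le' tendsto_const_nhds hg
  · filter_upwards [eventually_ge_atTop (0:ℝ)] with t ht
    exact hxnonneg t ht
  · filter_upwards [eventually_ge_atTop (Real.pi / (2 * C))] with t ht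
    have h0 : (0:ℝ) ≤ t := le_trans (by positivity) ht
    have hlog := hkey t ht
    have h1x : (0:ℝ) < 1 + x t ^ 2 := by positivity
    have hle : 1 + x t ^ 2 ≤ Real.exp (2 * C * R t) := by
      rw [← Real.exp_log h1x]
      exact Real.exp_le_exp.2 hlog
    have : x t ^ 2 ≤ Real.exp (2 * C * R t) - 1 := by linarith
    rw [show x t = Real.sqrt (x t ^ 2) from (Real.sqrt_sq (hxnonneg t h0)).symm]
    exact Real.sqrt_le_sqrt this


theorem final (x x' y : ℝ → ℝ) (C : ℝ) (hC : 0 < C) (a : ℝ) (ha : 0 < a)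
    (hxnonneg : ∀ t, 0 ≤ t → 0 ≤ x t)
    (hynonneg : ∀ t, 0 ≤ t → 0 ≤ y t)
    (hyloc : LocallyIntegrableOn y (Set.Ici 0))
    (hderiv : ∀ t, 0 ≤ t → HasDerivAt x (x' t) t)
    (hineq : ∀ t, 0 ≤ t → x' t + y t ≤ C * (x t ^ 2 + 1))
    (hint : IntegrableOn x (Set.Ici 0))
    (hx0 : Tendsto x atTop (𝓝 0)) :
    Filter.limsup (fun t => ∫ s in t..(t + a), y s) atTop ≤ C * a := by
  have hxcont : ∀ t, 0 ≤ t → ContinuousAt x t := fun t ht => (hderiv t ht).continuousAt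
  have hxconton : ContinuousOn x (Set.Ici 0) := fun t ht => (hxcont t ht).continuousWithinAt
  -- interval integrability facts for t ≥ 0
  have hIcc : ∀ t : ℝ, 0 ≤ t → Set.Icc t (t + a) ⊆ Set.Ici 0 :=
    fun t ht s hs => le_trans ht hs.1
  have hx2int : ∀ t : ℝ, 0 ≤ t →
      IntervalIntegrable (fun s => x s ^ 2) MeasureTheory.volume t (t + a) := by
    intro t ht
    apply ContinuousOn.intervalIntegrable
    rw [Set.uIcc_of_le (by linarith)]
    exact ((hxconton.mono (hIcc t ht)).pow 2)
  have hyint : ∀ t : ℝ, 0 ≤ t →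
      IntervalIntegrable y MeasureTheory.volume t (t + a) := by
    intro t ht
    rw [intervalIntegrable_iff_integrableOn_Icc_of_le (by linarith)]
    exact hyloc.integrableOn_compact_subset (hIcc t ht) isCompact_Icc
  -- main pointwise bound
  have hbound : ∀ t : ℝ, 0 ≤ t →
      (∫ s in t..(t + a), y s) ≤ C * (∫ s in t..(t + a), x s ^ 2) + C * a + x t := by
    intro t ht
    have hta : t ≤ t + a := by linarith
    have hφint : IntegrableOn (fun s => C * (x s ^ 2 + 1) - y s) (Set.Icc t (t + a)) := by
      apply Integrable.sub
      · apply ContinuousOn.integrableOn_Icc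
        exact (((hxconton.mono (hIcc t ht)).pow 2).add continuousOn_const).const_smul C
      · exact hyloc.integrableOn_compact_subset (hIcc t ht) isCompact_Icc
    have hsub := intervalIntegral.sub_le_integral_of_hasDeriv_right_of_le hta
      (hxconton.mono (hIcc t ht))
      (fun s hs => ((hderiv s (le_trans ht hs.1.le)).hasDerivWithinAt))
      hφint
      (fun s hs => by
        have h0 : 0 ≤ s := le_trans ht hs.1.le
        linarith [hineq s h0, hynonneg s h0])
    have hsplit : (∫ s in t..(t + a), (C * (x s ^ 2 + 1) - y s))
        = C * (∫ s in t..(t + a), x s ^ 2) + C * a - ∫ s in t..(t + a), y s := by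
      have h1 : IntervalIntegrable (fun s => C * (x s ^ 2 + 1)) MeasureTheory.volume t (t + a) := by
        rw [intervalIntegrable_iff_integrableOn_Icc_of_le hta]
        apply ContinuousOn.integrableOn_Icc
        exact (((hxconton.mono (hIcc t ht)).pow 2).add continuousOn_const).const_smul C
      rw [intervalIntegral.integral_sub h1 (hyint t ht)]
      have h3 : (∫ s in t..(t + a), (x s ^ 2 + 1))
          = (∫ s in t..(t + a), x s ^ 2) + a := by
        rw [intervalIntegral.integral_add (hx2int t ht) intervalIntegrable_const,
          intervalIntegral.integral_const]
        simp
      have h2 : (∫ s in t..(t + a), C * (x s ^ 2 + 1))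
          = C * ((∫ s in t..(t + a), x s ^ 2) + a) := by
        rw [intervalIntegral.integral_const_mul, h3]
      rw [h2]; ring
    rw [hsplit] at hsub
    have hxta : 0 ≤ x (t + a) := hxnonneg (t + a) (by linarith)
    linarith
  -- the error term tends to zero
  have hIx : Tendsto (fun t => ∫ s in t..(t + a), x s) atTop (𝓝 0) := by
    have hint' : IntegrableOn x (Set.Ioi 0) := hint.mono_set Set.Ioi_subset_Ici_self
    have h1 : Tendsto (fun u : ℝ => ∫ s in (0:ℝ)..u, x s) atTop
        (𝓝 (∫ s in Set.Ioi 0, x s)) :=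
      MeasureTheory.intervalIntegral_tendsto_integral_Ioi 0 hint' tendsto_id
    have h2 : Tendsto (fun t : ℝ => (∫ s in (0:ℝ)..(t + a), x s) - ∫ s in (0:ℝ)..t, x s)
        atTop (𝓝 0) := by
      have h3 := h1.comp (tendsto_atTop_add_const_right atTop a tendsto_id)
      simpa using (h3.sub h1)
    refine h2.congr' ?_
    filter_upwards [eventually_ge_atTop (0:ℝ)] with t ht
    have hI1 : IntervalIntegrable x MeasureTheory.volume 0 (t + a) := by
      rw [intervalIntegrable_iff_integrableOn_Ioc_of_le (by linarith)]
      exact hint.mono_set (fun s hs => hs.1.le)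
    have hI2 : IntervalIntegrable x MeasureTheory.volume 0 t := by
      rw [intervalIntegrable_iff_integrableOn_Ioc_of_le ht]
      exact hint.mono_set (fun s hs => hs.1.le)
    rw [intervalIntegral.integral_interval_sub_left hI1 hI2]
  have hIx2 : Tendsto (fun t => ∫ s in t..(t + a), x s ^ 2) atTop (𝓝 0) := by
    apply tendsto_of_tendsto_of_tendsto_of_le_of_le' tendsto_const_nhds hIx
    · filter_upwards [eventually_ge_atTop (0:ℝ)] with t ht
      apply intervalIntegral.integral_nonneg (by linarith)
      intro s hs; positivity
    · have hev1 : ∀ᶠ t : ℝ in atTop, ∀ s ∈ Set.Icc t (t + a), x s ≤ 1 := by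
        obtain ⟨T, hT⟩ := (hx0.eventually (gt_mem_nhds one_pos)).exists_forall_of_atTop
        filter_upwards [eventually_ge_atTop T] with t ht s hs
        exact (hT s (le_trans ht hs.1)).le
      filter_upwards [hev1, eventually_ge_atTop (0:ℝ)] with t ht1 ht0
      have hxint : IntervalIntegrable x MeasureTheory.volume t (t + a) := by
        rw [intervalIntegrable_iff_integrableOn_Ioc_of_le (by linarith)]
        exact hint.mono_set (fun s hs => le_trans ht0 hs.1.le)
      apply intervalIntegral.integral_mono_on (by linarith) (hx2int t ht0) hxint
      intro s hs
      have h0 : 0 ≤ s := le_trans ht0 hs.1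
      nlinarith [hxnonneg s h0, ht1 s hs]
  have herr : Tendsto (fun t => C * (∫ s in t..(t + a), x s ^ 2) + x t) atTop (𝓝 0) := by
    have := (hIx2.const_mul C).add hx0
    simpa using this
  -- conclude
  refine le_of_forall_pos_le_add fun ε hε => ?_
  apply Filter.limsup_le_of_le
  · apply Filter.isCoboundedUnder_le_of_eventually_le atTop (x := 0)
    filter_upwards [eventually_ge_atTop (0:ℝ)] with t ht
    apply intervalIntegral.integral_nonneg (by linarith)
    intro s hs
    exact hynonneg s (le_trans ht hs.1)
  · have hev := herr.eventually (gt_mem_nhds hε)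
    filter_upwards [hev, eventually_ge_atTop (0:ℝ)] with t ht1 ht0
    have := hbound t ht0
    linarith [this, ht1.le]

/-- Lemma A.1 (second part): under the same hypotheses, the sliding-window integrals of `y`
satisfy `limsup_{t→∞} ∫_t^{t+a} y ≤ C' a` for every `a > 0`, with `C'` depending only on `C`. -/
theorem stmt2 (x x' y : ℝ → ℝ) (C : ℝ) (hC : 0 < C)
    (hxnonneg : ∀ t, 0 ≤ t → 0 ≤ x t)
    (hynonneg : ∀ t, 0 ≤ t → 0 ≤ y t)
    (hymeas : Measurable y)
    (hyloc : LocallyIntegrableOn y (Set.Ici 0))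
    (hderiv : ∀ t, 0 ≤ t → HasDerivAt x (x' t) t)
    (hineq : ∀ t, 0 ≤ t → x' t + y t ≤ C * (x t ^ 2 + 1))
    (hcomp : ∀ t, 0 ≤ t → x t ≤ C * y t)
    (hint : IntegrableOn x (Set.Ici 0)) :
    ∃ C' : ℝ, 0 < C' ∧ ∀ a : ℝ, 0 < a →
      Filter.limsup (fun t => ∫ s in t..(t + a), y s) atTop ≤ C' * a := by
  refine ⟨C, hC, fun a ha => ?_⟩
  have hx' : ∀ t, 0 ≤ t → x' t ≤ C * (x t ^ 2 + 1) := fun t ht => by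
    linarith [hineq t ht, hynonneg t ht]
  have hFanti := arctan_anti x x' C hderiv hx'
  have hxcont : ∀ t, 0 ≤ t → ContinuousAt x t := fun t ht => (hderiv t ht).continuousAt
  have hkey := key_decay x C hC hxnonneg hxcont hFanti hint
  have htail := tail_tendsto x hint
  have hx0 := x_tendsto_zero x C hC hxnonneg hkey htail
  exact final x x' y C hC a ha hxnonneg hynonneg hyloc hderiv hineq hint hx0
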